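/- Let f, h ∈ k[[u]] be nonzero power series with lowest coefficients f_ℓ, h_m, and suppose v(f) ≥ v(h) and (p−1) divides v(f) − v(h); set j = (v(f) − v(h))/(p−1). Then every nonzero g ∈ k[[u]] with f·g = g^p·h has u-adic order j, and the map sending such a g to its coefficient in degree j is a bijection from the set { g ∈ k[[u]] : g ≠ 0 and f·g = g^p·h } onto the set { x ∈ k : x ≠ 0 and x^{p−1}·h_m = f_ℓ }. In particular, for each fixed value of the degree-j coefficient the solution g is unique. -/

import Mathlib

open PowerSeries

section Aux

variable {k : Type*} [Field k]

theorem PS.charP (p : ℕ) [CharP k p] : CharP (PowerSeries k) p := by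
  constructor
  intro x
  rw [← map_natCast (C (R := k)) x, ← map_zero (C (R := k))]
  constructor
  · intro hx
    exact (CharP.cast_eq_zero_iff k p x).mp (PowerSeries.C_injective hx)
  · intro hx
    rw [(CharP.cast_eq_zero_iff k p x).mpr hx]

theorem PS.coeff_pow_char {p : ℕ} (hp : p.Prime) [CharP k p]
    (g : PowerSeries k) (n : ℕ) :
    coeff n (g ^ p) = if p ∣ n then (coeff (n / p) g) ^ p else 0 := by
  classical
  haveI : Fact p.Prime := ⟨hp⟩
  haveI : CharP (PowerSeries k) p := PS.charP p
  set P : Polynomial k := trunc (n + 1) g with hP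
  set s : PowerSeries k := g - (P : PowerSeries k) with hs
  have hsX : (X : PowerSeries k) ^ (n + 1) ∣ s := by
    rw [X_pow_dvd_iff]
    intro m hm
    rw [hs, map_sub, Polynomial.coeff_coe, hP, coeff_trunc, if_pos hm, sub_self]
  have h1 : g ^ p = (P : PowerSeries k) ^ p + s ^ p := by
    rw [← add_pow_char]
    congr 1
    simp [hs]
  have h2 : coeff n (s ^ p) = 0 := by
    obtain ⟨t, ht⟩ := hsX
    have hd : (X : PowerSeries k) ^ ((n + 1) * p) ∣ s ^ p := by
      rw [ht, mul_pow, ← pow_mul]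
      exact Dvd.intro _ rfl
    rw [X_pow_dvd_iff] at hd
    exact hd n (by nlinarith [hp.two_le])
  have h3 : ((P : PowerSeries k)) ^ p = ((P ^ p : Polynomial k) : PowerSeries k) := by
    push_cast; ring
  rw [h1, map_add, h2, add_zero, h3, Polynomial.coeff_coe,
    ← Polynomial.map_frobenius_expand p, Polynomial.coeff_map, Polynomial.coeff_expand hp.pos]
  split_ifs with hd
  · rw [frobenius_def]
    congr 1
    rw [coeff_trunc]
    have : n / p < n + 1 := Nat.lt_succ_of_le (Nat.div_le_self n p)
    simp [this]
  · simp

/-- coefficient of the product at the sum of the two lowest degrees. -/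
theorem PS.coeff_mul_lowest (f g : PowerSeries k) (a b : ℕ)
    (hfa : ∀ i < a, coeff i f = 0) (hgb : ∀ i < b, coeff i g = 0) :
    coeff (a + b) (f * g) = coeff a f * coeff b g := by
  rw [coeff_mul]
  apply Finset.sum_eq_single (a, b)
  · intro q hq hne
    rw [Finset.HasAntidiagonal.mem_antidiagonal] at hq
    rcases lt_or_ge q.1 a with h1 | h1
    · rw [hfa _ h1, zero_mul]
    · have h2 : q.2 < b := by
        rcases eq_or_lt_of_le h1 with h3 | h3
        · exact absurd (Prod.ext h3.symm (by omega)) hne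
        · omega
      rw [hgb _ h2, mul_zero]
  · intro hab
    simp at hab

/-- coefficients of the product below the sum of the lowest degrees vanish. -/
theorem PS.coeff_mul_low (f g : PowerSeries k) (a b : ℕ)
    (hfa : ∀ i < a, coeff i f = 0) (hgb : ∀ i < b, coeff i g = 0)
    (N : ℕ) (hN : N < a + b) : coeff N (f * g) = 0 := by
  rw [coeff_mul]
  apply Finset.sum_eq_zero
  intro q hq
  rw [Finset.HasAntidiagonal.mem_antidiagonal] at hq
  rcases lt_or_ge q.1 a with h1 | h1
  · rw [hfa _ h1, zero_mul]
  · rw [hgb _ (by omega), mul_zero]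

/-- recursive construction of the solution coefficients. -/
noncomputable def PS.solA (p vf j : ℕ) (f h : PowerSeries k) (x : k) : ℕ → k :=
  WellFoundedLT.fix (motive := fun _ => k) (fun i ih =>
    if i < j then 0
    else if i = j then x
    else (coeff vf f)⁻¹ *
      ((∑ q ∈ Finset.HasAntidiagonal.antidiagonal (vf + i),
          if hq : p ∣ q.1 ∧ q.1 / p < i then (ih (q.1 / p) hq.2) ^ p * coeff q.2 h else 0) -
        ∑ q ∈ Finset.HasAntidiagonal.antidiagonal (vf + i),
          if hq : q.2 < i then coeff q.1 f * ih q.2 hq else 0))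

theorem PS.solA_eq (p vf j : ℕ) (f h : PowerSeries k) (x : k) (i : ℕ) :
    PS.solA p vf j f h x i =
      if i < j then 0
      else if i = j then x
      else (coeff vf f)⁻¹ *
        ((∑ q ∈ Finset.HasAntidiagonal.antidiagonal (vf + i),
            if p ∣ q.1 ∧ q.1 / p < i then (PS.solA p vf j f h x (q.1 / p)) ^ p * coeff q.2 h
            else 0) -
          ∑ q ∈ Finset.HasAntidiagonal.antidiagonal (vf + i),
            if q.2 < i then coeff q.1 f * PS.solA p vf j f h x q.2 else 0) := by
  rw [PS.solA, WellFoundedLT.fix_eq]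
  simp only [dite_eq_ite]

end Aux

/-- **Lemma (uniqueness and parametrization of solutions of `f·g = φ(g)·h`).**
Let `k` be a field of characteristic `p`, and `f, h ∈ k[[u]]` nonzero with `u`-adic orders
`vf, vh` and suppose `vf = vh + j(p−1)` (i.e. `vf ≥ vh`, `(p−1) ∣ vf − vh` and
`j = (vf − vh)/(p−1)`).  Then every nonzero `g` with `f·g = g^p·h` has `u`-adic order `j`,
and `g ↦ (coefficient of g in degree j)` is a bijection from the set of nonzero solutions
onto `{x ∈ k | x ≠ 0 ∧ x^{p−1}·h_m = f_ℓ}`; in particular the solution is unique for each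
fixed degree-`j` coefficient. -/
theorem cyclic_semilinear_solution_bijection
    (p : ℕ) (hp : p.Prime) (k : Type*) [Field k] [CharP k p]
    (f h : PowerSeries k) (hf : f ≠ 0) (hh : h ≠ 0)
    (vf vh j : ℕ)
    (hvf : coeff vf f ≠ 0 ∧ ∀ i < vf, coeff i f = 0)
    (hvh : coeff vh h ≠ 0 ∧ ∀ i < vh, coeff i h = 0)
    (hj : vf = vh + j * (p - 1)) :
    (∀ g : PowerSeries k, g ≠ 0 → f * g = g ^ p * h →
        (coeff j g ≠ 0 ∧ ∀ i < j, coeff i g = 0)) ∧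
    Set.BijOn (fun g => coeff j g)
      {g : PowerSeries k | g ≠ 0 ∧ f * g = g ^ p * h}
      {x : k | x ≠ 0 ∧ x ^ (p - 1) * coeff vh h = coeff vf f} := by
  classical
  obtain ⟨hf0, hfl⟩ := hvf
  obtain ⟨hh0, hhl⟩ := hvh
  have hp2 := hp.two_le
  have hppos : 0 < p := by omega
  have hpj : vf + j = p * j + vh := by
    have h1 : p * j = (p - 1) * j + j := by
      have h2 : p = (p - 1) + 1 := by omega
      calc p * j = ((p - 1) + 1) * j := by rw [← h2]
        _ = (p - 1) * j + j := by ring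
    rw [h1, hj]; ring
  -- every nonzero solution has u-adic order j
  have key : ∀ g : PowerSeries k, g ≠ 0 → f * g = g ^ p * h →
      (coeff j g ≠ 0 ∧ ∀ i < j, coeff i g = 0) := by
    intro g hg heq
    have hex : ∃ n, coeff n g ≠ 0 := by
      by_contra hc
      push_neg at hc
      exact hg (PowerSeries.ext fun n => by simp [hc n])
    set d := Nat.find hex with hdd
    have hd1 : coeff d g ≠ 0 := Nat.find_spec hex
    have hd2 : ∀ i < d, coeff i g = 0 := by
      intro i hi
      have := Nat.find_min hex hi
      tauto
    have hgp0 : ∀ i < p * d, coeff i (g ^ p) = 0 := by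
      intro i hi
      rw [PS.coeff_pow_char hp]
      split_ifs with hdvd
      · have hi' : i < d * p := by rw [mul_comm]; exact hi
        rw [hd2 (i / p) ((Nat.div_lt_iff_lt_mul hppos).mpr hi'), zero_pow hp.ne_zero]
      · rfl
    have hL : coeff (vf + d) (f * g) ≠ 0 := by
      rw [PS.coeff_mul_lowest f g vf d hfl hd2]
      exact mul_ne_zero hf0 hd1
    have hR : coeff (p * d + vh) (g ^ p * h) ≠ 0 := by
      rw [PS.coeff_mul_lowest _ _ _ _ hgp0 hhl,
        PS.coeff_pow_char hp, if_pos (dvd_mul_right p d), Nat.mul_div_cancel_left d hppos]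
      exact mul_ne_zero (pow_ne_zero _ hd1) hh0
    have e1 : vf + d = p * d + vh := by
      by_contra hne
      rcases lt_or_gt_of_ne hne with hlt | hgt
      · rw [heq] at hL
        exact hL (PS.coeff_mul_low _ _ _ _ hgp0 hhl _ hlt)
      · rw [← heq] at hR
        exact hR (PS.coeff_mul_low _ _ _ _ hfl hd2 _ hgt)
    have hdj : d = j := by
      have h2 : p * d = (p - 1) * d + d := by
        have hp1 : p = (p - 1) + 1 := by omega
        calc p * d = ((p - 1) + 1) * d := by rw [← hp1]
          _ = (p - 1) * d + d := by ring
      rw [hj, h2] at e1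
      have e3 : (p - 1) * j = (p - 1) * d := by
        have : j * (p - 1) = (p - 1) * j := mul_comm _ _
        linarith
      exact (Nat.eq_of_mul_eq_mul_left (by omega) e3).symm
    rw [← hdj]
    exact ⟨hd1, hd2⟩
  refine ⟨key, ?_, ?_, ?_⟩
  · -- MapsTo
    rintro g ⟨hg0, hgeq⟩
    obtain ⟨hx, hlow⟩ := key g hg0 hgeq
    refine ⟨hx, ?_⟩
    have hgp0 : ∀ i < p * j, coeff i (g ^ p) = 0 := by
      intro i hi
      rw [PS.coeff_pow_char hp]
      split_ifs with hdvd
      · have hi' : i < j * p := by rw [mul_comm]; exact hi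
        rw [hlow (i / p) ((Nat.div_lt_iff_lt_mul hppos).mpr hi'), zero_pow hp.ne_zero]
      · rfl
    have hLc : coeff (vf + j) (f * g) = coeff vf f * coeff j g :=
      PS.coeff_mul_lowest f g vf j hfl hlow
    have hRc : coeff (p * j + vh) (g ^ p * h) = (coeff j g) ^ p * coeff vh h := by
      rw [PS.coeff_mul_lowest _ _ _ _ hgp0 hhl,
        PS.coeff_pow_char hp, if_pos (dvd_mul_right p j), Nat.mul_div_cancel_left j hppos]
    rw [hgeq, hpj, hRc] at hLc
    have hxp : (coeff j g) ^ p = (coeff j g) ^ (p - 1) * coeff j g := by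
      rw [← pow_succ]
      congr 1
      omega
    rw [hxp] at hLc
    apply mul_right_cancel₀ hx
    rw [← hLc]
    ring
  · -- InjOn
    intro g1 hg1 g2 hg2 hc
    by_contra hne
    haveI : Fact p.Prime := ⟨hp⟩
    haveI : CharP (PowerSeries k) p := PS.charP p
    have hd0 : g1 - g2 ≠ 0 := sub_ne_zero.mpr hne
    have hde : f * (g1 - g2) = (g1 - g2) ^ p * h := by
      rw [mul_sub, hg1.2, hg2.2, ← sub_mul, sub_pow_char]
    apply (key _ hd0 hde).1
    rw [map_sub]
    exact sub_eq_zero.mpr hc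
  · -- SurjOn
    rintro x ⟨hx0, hxe⟩
    set a := PS.solA p vf j f h x with ha
    have ha_lt : ∀ i < j, a i = 0 := by
      intro i hi
      rw [ha, PS.solA_eq, if_pos hi]
    have ha_j : a j = x := by
      rw [ha, PS.solA_eq, if_neg (lt_irrefl j), if_pos rfl]
    set g := PowerSeries.mk a with hg
    have hco : ∀ n, coeff n g = a n := fun n => coeff_mk n a
    have hg0 : g ≠ 0 := by
      intro hz
      apply hx0
      rw [← ha_j, ← hco, hz, map_zero]
    have hmain : f * g = g ^ p * h := by
      ext N
      rw [coeff_mul, coeff_mul]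
      have hLrw : ∀ q ∈ Finset.HasAntidiagonal.antidiagonal N,
          coeff q.1 f * coeff q.2 g = coeff q.1 f * a q.2 := fun q _ => by rw [hco]
      have hRrw : ∀ q ∈ Finset.HasAntidiagonal.antidiagonal N,
          coeff q.1 (g ^ p) * coeff q.2 h =
            (if p ∣ q.1 then (a (q.1 / p)) ^ p * coeff q.2 h else 0) := by
        intro q _
        rw [PS.coeff_pow_char hp]
        split_ifs with hd
        · rw [hco]
        · rw [zero_mul]
      rw [Finset.sum_congr rfl hLrw, Finset.sum_congr rfl hRrw]
      rcases lt_or_ge N (vf + j) with hN | hN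
      · rw [Finset.sum_eq_zero, Finset.sum_eq_zero]
        · intro q hq
          rw [Finset.HasAntidiagonal.mem_antidiagonal] at hq
          split_ifs with hd
          · rcases lt_or_ge (q.1 / p) j with hlt | hge
            · rw [ha_lt _ hlt, zero_pow hp.ne_zero, zero_mul]
            · have hq1 : p * j ≤ q.1 := by
                calc p * j ≤ p * (q.1 / p) := Nat.mul_le_mul_left p hge
                  _ = q.1 := Nat.mul_div_cancel' hd
              have hq2 : q.2 < vh := by linarith
              rw [hhl _ hq2, mul_zero]
          · rfl
        · intro q hq
          rw [Finset.HasAntidiagonal.mem_antidiagonal] at hq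
          rcases lt_or_ge q.1 vf with h1 | h1
          · rw [hfl _ h1, zero_mul]
          · rw [ha_lt _ (by omega), mul_zero]
      · obtain ⟨i, hij, rfl⟩ : ∃ i, j ≤ i ∧ N = vf + i := ⟨N - vf, by omega, by omega⟩
        rcases eq_or_lt_of_le hij with rfl | hji
        · -- lowest degree : i = j
          have hLs : (∑ q ∈ Finset.HasAntidiagonal.antidiagonal (vf + j), coeff q.1 f * a q.2) =
              coeff vf f * a j := by
            apply Finset.sum_eq_single (vf, j)
            · intro q hq hne
              rw [Finset.HasAntidiagonal.mem_antidiagonal] at hq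
              rcases lt_or_ge q.1 vf with h1 | h1
              · rw [hfl _ h1, zero_mul]
              · have h2 : q.2 ≤ j := by omega
                rcases lt_or_eq_of_le h2 with h3 | h3
                · rw [ha_lt _ h3, mul_zero]
                · exact absurd (Prod.ext (by omega) h3) hne
            · intro hmem
              simp at hmem
          have hRs : (∑ q ∈ Finset.HasAntidiagonal.antidiagonal (vf + j),
              if p ∣ q.1 then (a (q.1 / p)) ^ p * coeff q.2 h else 0) =
              if p ∣ p * j then (a ((p * j) / p)) ^ p * coeff vh h else 0 := by
            apply Finset.sum_eq_single (p * j, vh)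
            · intro q hq hne
              rw [Finset.HasAntidiagonal.mem_antidiagonal] at hq
              split_ifs with hd
              · rcases lt_or_ge (q.1 / p) j with hlt | hge
                · rw [ha_lt _ hlt, zero_pow hp.ne_zero, zero_mul]
                · have hq1 : p * j ≤ q.1 := by
                    calc p * j ≤ p * (q.1 / p) := Nat.mul_le_mul_left p hge
                      _ = q.1 := Nat.mul_div_cancel' hd
                  have hq2 : q.2 ≤ vh := by linarith
                  rcases lt_or_eq_of_le hq2 with h3 | h3
                  · rw [hhl _ h3, mul_zero]
                  · exact absurd (Prod.ext (by linarith) h3) hne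
              · rfl
            · intro hmem
              exact absurd (Finset.HasAntidiagonal.mem_antidiagonal.mpr hpj.symm) hmem
          rw [hLs, hRs, if_pos (dvd_mul_right p j), Nat.mul_div_cancel_left j hppos, ha_j]
          have hxp : x ^ p = x ^ (p - 1) * x := by
            rw [← pow_succ]
            congr 1
            omega
          rw [hxp, ← hxe]
          ring
        · -- i > j : use the recursion
          have hstep : coeff vf f * a i =
              (∑ q ∈ Finset.HasAntidiagonal.antidiagonal (vf + i),
                if p ∣ q.1 ∧ q.1 / p < i then (a (q.1 / p)) ^ p * coeff q.2 h else 0) -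
              (∑ q ∈ Finset.HasAntidiagonal.antidiagonal (vf + i),
                if q.2 < i then coeff q.1 f * a q.2 else 0) := by
            rw [ha]
            rw [PS.solA_eq p vf j f h x i, if_neg (by omega), if_neg (by omega),
              ← mul_assoc, mul_inv_cancel₀ hf0, one_mul]
          have hLs : (∑ q ∈ Finset.HasAntidiagonal.antidiagonal (vf + i), coeff q.1 f * a q.2) =
              (∑ q ∈ Finset.HasAntidiagonal.antidiagonal (vf + i),
                if q.2 < i then coeff q.1 f * a q.2 else 0) + coeff vf f * a i := by
            have hsplit : ∀ q ∈ Finset.HasAntidiagonal.antidiagonal (vf + i),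
                coeff q.1 f * a q.2 =
                  (if q.2 < i then coeff q.1 f * a q.2 else 0) +
                  (if q = (vf, i) then coeff vf f * a i else 0) := by
              intro q hq
              rw [Finset.HasAntidiagonal.mem_antidiagonal] at hq
              rcases lt_trichotomy q.2 i with h1 | h1 | h1
              · rw [if_pos h1, if_neg (fun he => by simp [he] at h1), add_zero]
              · have hq1 : q.1 = vf := by omega
                rw [if_neg (by omega), if_pos (Prod.ext hq1 h1), hq1, h1, zero_add]
              · rw [hfl q.1 (by omega), zero_mul, if_neg (by omega),
                  if_neg (fun he => by simp [he] at h1), add_zero]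
            rw [Finset.sum_congr rfl hsplit, Finset.sum_add_distrib,
              Finset.sum_ite_eq' (Finset.HasAntidiagonal.antidiagonal (vf + i)) ((vf, i) : ℕ × ℕ)
                (fun _ => coeff vf f * a i),
              if_pos (show ((vf, i) : ℕ × ℕ) ∈ Finset.HasAntidiagonal.antidiagonal (vf + i) from
                Finset.HasAntidiagonal.mem_antidiagonal.mpr rfl)]
          have hRs : (∑ q ∈ Finset.HasAntidiagonal.antidiagonal (vf + i),
              if p ∣ q.1 then (a (q.1 / p)) ^ p * coeff q.2 h else 0) =
              (∑ q ∈ Finset.HasAntidiagonal.antidiagonal (vf + i),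
                if p ∣ q.1 ∧ q.1 / p < i then (a (q.1 / p)) ^ p * coeff q.2 h else 0) := by
            apply Finset.sum_congr rfl
            intro q hq
            rw [Finset.HasAntidiagonal.mem_antidiagonal] at hq
            by_cases hd : p ∣ q.1
            · by_cases hlt : q.1 / p < i
              · rw [if_pos hd, if_pos ⟨hd, hlt⟩]
              · have hq1 : p * i ≤ q.1 := by
                  calc p * i ≤ p * (q.1 / p) := Nat.mul_le_mul_left p (le_of_not_gt hlt)
                    _ = q.1 := Nat.mul_div_cancel' hd
                have h5 : p * i = p * j + p * (i - j) := by
                  rw [← Nat.mul_add, Nat.add_sub_cancel' (le_of_lt hji)]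
                have h6 : i - j < p * (i - j) := by
                  have h7 : 0 < i - j := by omega
                  simpa using (Nat.mul_lt_mul_right h7).mpr (show 1 < p by omega)
                have h7 : j + (i - j) = i := by omega
                have hq2 : q.2 < vh := by linarith
                rw [if_pos hd, if_neg (fun hc => hlt hc.2), hhl _ hq2, mul_zero]
            · rw [if_neg hd, if_neg (fun hc => hd hc.1)]
          rw [hLs, hRs, hstep]
          ring
    exact ⟨g, ⟨hg0, hmain⟩, by show coeff j g = x; rw [hco, ha_j]⟩
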